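/- In the Nussinov-Jacobson model with pair energies α (G–C), β (A–U), γ (G–U) satisfying α,β,γ < 0 and α,β < γ, let 0 < Δ_N ≤ min(|α|,|β|). If a structure S admits an A-unpaired Watson-Crick 1-design w (all unpaired positions of S carry letter A), then w is also a Δ_N-design for S in the Nussinov-Jacobson model. -/

import Mathlib

open scoped Classical

/-- An RNA nucleotide. -/
inductive Base | A | U | C | G
deriving DecidableEq, Inhabited, Repr

/-- The Watson-Crick pairing relation (only G-C and A-U pairs allowed). -/
def wcPair : Base → Base → Prop
  | .G, .C => True | .C, .G => True
  | .A, .U => True | .U, .A => True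
  | _, _ => False

/-- The Nussinov-Jacobson pairing relation (G-C, A-U and G-U pairs allowed). -/
def njPair : Base → Base → Prop
  | .G, .C => True | .C, .G => True
  | .A, .U => True | .U, .A => True
  | .G, .U => True | .U, .G => True
  | _, _ => False

/-- An RNA (pseudoknot-free) secondary structure, 0-indexed positions. -/
structure SecStr where
  len : ℕ
  pairs : Finset (ℕ × ℕ)
  lt : ∀ p ∈ pairs, p.1 < p.2
  ub : ∀ p ∈ pairs, p.2 < len
  once : ∀ p ∈ pairs, ∀ q ∈ pairs, p ≠ q →
    p.1 ≠ q.1 ∧ p.1 ≠ q.2 ∧ p.2 ≠ q.1 ∧ p.2 ≠ q.2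
  noncross : ∀ p ∈ pairs, ∀ q ∈ pairs,
    ¬ (p.1 < q.1 ∧ q.1 < p.2 ∧ p.2 < q.2)

def SecStr.pairedAt (S : SecStr) (i : ℕ) : Prop := ∃ p ∈ S.pairs, p.1 = i ∨ p.2 = i
def SecStr.unpairedAt (S : SecStr) (i : ℕ) : Prop := i < S.len ∧ ¬ S.pairedAt i
def SecStr.saturated (S : SecStr) : Prop := ∀ i < S.len, S.pairedAt i

/-- A structure is compatible with a sequence `w` (w.r.t. pairing relation `R`)
if it has the right length and all base pairs are `R`-valid. -/
def compat {α : Type*} [Inhabited α] (R : α → α → Prop) (w : List α) (S : SecStr) : Prop :=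
  S.len = w.length ∧ ∀ p ∈ S.pairs, R (w.getD p.1 default) (w.getD p.2 default)

/-- Base-pair-sum free energy of a structure on a sequence. -/
noncomputable def energy {α : Type*} [Inhabited α] (E : α → α → ℝ) (w : List α)
    (S : SecStr) : ℝ :=
  ∑ p ∈ S.pairs, E (w.getD p.1 default) (w.getD p.2 default)

/-- `w` is a Δ-design for `S`: `S` is compatible with `w`, and every other
compatible structure has energy at least `energy E w S + Δ`. -/
def isDesign {α : Type*} [Inhabited α] (R : α → α → Prop) (E : α → α → ℝ) (Δ : ℝ)
    (w : List α) (S : SecStr) : Prop :=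
  compat R w S ∧ ∀ S' : SecStr, compat R w S' → S' ≠ S →
    energy E w S' ≥ energy E w S + Δ

/- Tree representation machinery. -/
def encloses (q p : ℕ × ℕ) : Prop := q.1 < p.1 ∧ p.2 < q.2
def SecStr.hasParent (S : SecStr) (p : ℕ × ℕ) : Prop := ∃ q ∈ S.pairs, encloses q p
def SecStr.isParentOf (S : SecStr) (q p : ℕ × ℕ) : Prop :=
  q ∈ S.pairs ∧ p ∈ S.pairs ∧ encloses q p ∧ ¬ ∃ m ∈ S.pairs, encloses q m ∧ encloses m p

/-- Degree of a paired node: number of paired children plus one for the parent (if any). -/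
noncomputable def SecStr.pairDeg (S : SecStr) (p : ℕ × ℕ) : ℕ :=
  (S.pairs.filter (fun c => S.isParentOf p c)).card + (if S.hasParent p then 1 else 0)
/-- Degree of the virtual root: number of top-level base pairs. -/
noncomputable def SecStr.rootDeg (S : SecStr) : ℕ :=
  (S.pairs.filter (fun p => ¬ S.hasParent p)).card
/-- All nodes of the tree representation (including the virtual root) have degree ≤ d. -/
def SecStr.degLE (S : SecStr) (d : ℕ) : Prop :=
  S.rootDeg ≤ d ∧ ∀ p ∈ S.pairs, S.pairDeg p ≤ d

/-- A sequence is saturable if a saturated structure is compatible with it. -/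
def saturable {α : Type*} [Inhabited α] (R : α → α → Prop) (w : List α) : Prop :=
  ∃ S : SecStr, compat R w S ∧ S.saturated
/-- Atomic saturable: saturable, and no (nonempty) proper prefix is saturable. -/
def atomicSaturable {α : Type*} [Inhabited α] (R : α → α → Prop) (w : List α) : Prop :=
  saturable R w ∧ ∀ k, 0 < k → k < w.length → ¬ saturable R (w.take k)

/- Motifs. -/
def SecStr.unpChildOfPair (S : SecStr) (q : ℕ × ℕ) (u : ℕ) : Prop :=
  S.unpairedAt u ∧ q.1 < u ∧ u < q.2 ∧
    ¬ ∃ m ∈ S.pairs, q.1 < m.1 ∧ m.1 < u ∧ u < m.2 ∧ m.2 < q.2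
def SecStr.unpChildOfRoot (S : SecStr) (u : ℕ) : Prop :=
  S.unpairedAt u ∧ ¬ ∃ m ∈ S.pairs, m.1 < u ∧ u < m.2
/-- Motif m₅ : a tree node (possibly the root) of degree greater than four. -/
def hasM5 (S : SecStr) : Prop := 4 < S.rootDeg ∨ ∃ p ∈ S.pairs, 4 < S.pairDeg p
/-- Motif m₃∘ : a node with an unpaired child and degree greater than two. -/
def hasM3o (S : SecStr) : Prop :=
  (∃ q ∈ S.pairs, (∃ u, S.unpChildOfPair q u) ∧ 2 < S.pairDeg q) ∨
  ((∃ u, S.unpChildOfRoot u) ∧ 2 < S.rootDeg)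

/- Colorings of the tree representation. -/
inductive Col | black | white | gray
deriving DecidableEq

noncomputable def childCount (S : SecStr) (col : ℕ × ℕ → Col) (q : ℕ × ℕ) (c : Col) : ℕ :=
  (S.pairs.filter (fun p => S.isParentOf q p ∧ col p = c)).card
noncomputable def rootChildCount (S : SecStr) (col : ℕ × ℕ → Col) (c : Col) : ℕ :=
  (S.pairs.filter (fun p => ¬ S.hasParent p ∧ col p = c)).card

/-- A proper coloring of the tree representation. -/
def properCol (S : SecStr) (col : ℕ × ℕ → Col) : Prop :=
  rootChildCount S col .black ≤ 1 ∧ rootChildCount S col .white ≤ 1 ∧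
  rootChildCount S col .gray ≤ 2 ∧
  ∀ q ∈ S.pairs,
    childCount S col q .black ≤ 1 ∧ childCount S col q .white ≤ 1 ∧
    childCount S col q .gray ≤ 2 ∧
    childCount S col q (col q) ≤ 1 ∧
    (col q = .black → ∀ p ∈ S.pairs, S.isParentOf q p → col p ≠ .white) ∧
    (col q = .white → ∀ p ∈ S.pairs, S.isParentOf q p → col p ≠ .black)

/-- Level of a paired node: #black minus #white on the path to the root (incl. itself). -/
noncomputable def pairLvl (S : SecStr) (col : ℕ × ℕ → Col) (p : ℕ × ℕ) : ℤ :=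
  ((S.pairs.filter (fun q => q.1 ≤ p.1 ∧ p.2 ≤ q.2 ∧ col q = .black)).card : ℤ) -
  ((S.pairs.filter (fun q => q.1 ≤ p.1 ∧ p.2 ≤ q.2 ∧ col q = .white)).card : ℤ)
/-- Level of an unpaired node. -/
noncomputable def unpLvl (S : SecStr) (col : ℕ × ℕ → Col) (u : ℕ) : ℤ :=
  ((S.pairs.filter (fun q => q.1 < u ∧ u < q.2 ∧ col q = .black)).card : ℤ) -
  ((S.pairs.filter (fun q => q.1 < u ∧ u < q.2 ∧ col q = .white)).card : ℤ)

/-- Separated coloring: gray-node levels and unpaired-node levels are disjoint. -/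
def separatedCol (S : SecStr) (col : ℕ × ℕ → Col) : Prop :=
  ∀ p ∈ S.pairs, col p = .gray → ∀ u, S.unpairedAt u →
    pairLvl S col p ≠ unpLvl S col u

/-- A bipartite energy model: its compatibility graph is bipartite. -/
def Bipartite {α : Type*} (R : α → α → Prop) : Prop :=
  ∃ f : α → Bool, ∀ a b, R a b → f a ≠ f b

/-- The k-stutter of a sequence. -/
def stutterSeq {α : Type*} (w : List α) (k : ℕ) : List α :=
  w.flatMap (fun a => List.replicate k a)
/-- The base pairs of the k-stutter of a structure. -/
def stutterPairs (S : SecStr) (k : ℕ) : Finset (ℕ × ℕ) :=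
  S.pairs.biUnion (fun p => (Finset.range k).image
    (fun m => (k * p.1 + m, k * p.2 + (k - 1 - m))))

/-- Two base pairs belong to the same band (maximal stack) of S. -/
def sameBand (S : SecStr) (p p' : ℕ × ℕ) : Prop :=
  p ∈ S.pairs ∧ p' ∈ S.pairs ∧ p.1 + p.2 = p'.1 + p'.2 ∧
  ∀ x, min p.1 p'.1 ≤ x → x ≤ max p.1 p'.1 → (x, p.1 + p.2 - x) ∈ S.pairs

/-- Nussinov-Jacobson energies: a for G-C, b for A-U, g for G-U. -/
def njE (a b g : ℝ) : Base → Base → ℝ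
  | .G, .C => a | .C, .G => a
  | .A, .U => b | .U, .A => b
  | .G, .U => g | .U, .G => g
  | _, _ => 0

/-- level of position i : #G minus #C in the prefix of w ending at i. -/
def lvl (w : List Base) (i : ℕ) : ℤ :=
  ((w.take (i+1)).count Base.G : ℤ) - ((w.take (i+1)).count Base.C : ℤ)

/- ===== auxiliary machinery for stmt19 ===== -/
section Stmt19Aux

def bGC : Base → Base → Prop := fun x y => (x = .G ∧ y = .C) ∨ (x = .C ∧ y = .G)
def bAU : Base → Base → Prop := fun x y => (x = .A ∧ y = .U) ∨ (x = .U ∧ y = .A)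
def bGU : Base → Base → Prop := fun x y => (x = .G ∧ y = .U) ∨ (x = .U ∧ y = .G)

lemma nj_cases {x y : Base} (h : njPair x y) : bGC x y ∨ bAU x y ∨ bGU x y := by
  cases x <;> cases y <;> simp_all [njPair, bGC, bAU, bGU]

lemma njE_GC (a b g : ℝ) {x y : Base} (h : bGC x y) : njE a b g x y = a := by
  rcases h with ⟨rfl, rfl⟩ | ⟨rfl, rfl⟩ <;> rfl

lemma njE_AU (a b g : ℝ) {x y : Base} (h : bAU x y) : njE a b g x y = b := by
  rcases h with ⟨rfl, rfl⟩ | ⟨rfl, rfl⟩ <;> rfl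

lemma njE_GU (a b g : ℝ) {x y : Base} (h : bGU x y) : njE a b g x y = g := by
  rcases h with ⟨rfl, rfl⟩ | ⟨rfl, rfl⟩ <;> rfl

lemma GC_not_AU {x y : Base} (h : bGC x y) : ¬ bAU x y := by
  rcases h with ⟨rfl, rfl⟩ | ⟨rfl, rfl⟩ <;> simp [bAU]

lemma GC_not_GU {x y : Base} (h : bGC x y) : ¬ bGU x y := by
  rcases h with ⟨rfl, rfl⟩ | ⟨rfl, rfl⟩ <;> simp [bGU]

lemma AU_not_GU {x y : Base} (h : bAU x y) : ¬ bGU x y := by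
  rcases h with ⟨rfl, rfl⟩ | ⟨rfl, rfl⟩ <;> simp [bGU]

lemma wc_nj {x y : Base} (h : wcPair x y) : njPair x y := by
  cases x <;> cases y <;> simp_all [wcPair, njPair]

lemma wc_of_classes {x y : Base} (h : bGC x y ∨ bAU x y) : wcPair x y := by
  rcases h with (⟨rfl, rfl⟩ | ⟨rfl, rfl⟩) | (⟨rfl, rfl⟩ | ⟨rfl, rfl⟩) <;> trivial

lemma wc_not_GU {x y : Base} (h : wcPair x y) : ¬ bGU x y := by
  cases x <;> cases y <;> simp_all [wcPair, bGU]

lemma wc_G_left {y : Base} (h : wcPair .G y) : y = .C := by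
  cases y <;> simp_all [wcPair]

lemma wc_G_right {x : Base} (h : wcPair x .G) : x = .C := by
  cases x <;> simp_all [wcPair]

lemma wc_U_left {y : Base} (h : wcPair .U y) : y = .A := by
  cases y <;> simp_all [wcPair]

lemma wc_U_right {x : Base} (h : wcPair x .U) : x = .A := by
  cases x <;> simp_all [wcPair]

/-- Pairs of `T` whose letters satisfy `P`. -/
noncomputable def pf (w : List Base) (P : Base → Base → Prop) (T : SecStr) : Finset (ℕ × ℕ) :=
  T.pairs.filter (fun p => P (w.getD p.1 default) (w.getD p.2 default))

lemma mem_pf {w : List Base} {P : Base → Base → Prop} {T : SecStr} {p : ℕ × ℕ} :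
    p ∈ pf w P T ↔ p ∈ T.pairs ∧ P (w.getD p.1 default) (w.getD p.2 default) := by
  simp [pf]

/-- positions of `w` carrying letter `x`. -/
noncomputable def pos (w : List Base) (x : Base) : Finset ℕ :=
  (Finset.range w.length).filter (fun i => w.getD i default = x)

lemma mem_pos {w : List Base} {x : Base} {i : ℕ} :
    i ∈ pos w x ↔ i < w.length ∧ w.getD i default = x := by
  simp [pos]

lemma split_pairs (w : List Base) (T : SecStr) (hc : compat njPair w T) :
    (T.pairs.filter (fun p => ¬ bGC (w.getD p.1 default) (w.getD p.2 default))).filter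
      (fun p => bAU (w.getD p.1 default) (w.getD p.2 default)) = pf w bAU T ∧
    (T.pairs.filter (fun p => ¬ bGC (w.getD p.1 default) (w.getD p.2 default))).filter
      (fun p => ¬ bAU (w.getD p.1 default) (w.getD p.2 default)) = pf w bGU T := by
  constructor
  · rw [Finset.filter_filter]
    apply Finset.filter_congr
    intro p hp
    exact ⟨fun h => h.2, fun h => ⟨fun hgc => GC_not_AU hgc h, h⟩⟩
  · rw [Finset.filter_filter]
    apply Finset.filter_congr
    intro p hp
    constructor
    · intro h
      rcases nj_cases (hc.2 p hp) with h1 | h1 | h1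
      · exact absurd h1 h.1
      · exact absurd h1 h.2
      · exact h1
    · exact fun h => ⟨fun h1 => GC_not_GU h1 h, fun h1 => AU_not_GU h1 h⟩

lemma energy_nj (a b g : ℝ) (w : List Base) (T : SecStr) (hc : compat njPair w T) :
    energy (njE a b g) w T =
      a * (pf w bGC T).card + b * (pf w bAU T).card + g * (pf w bGU T).card := by
  obtain ⟨e1, e2⟩ := split_pairs w T hc
  have key := Finset.sum_filter_add_sum_filter_not T.pairs
    (fun p => bGC (w.getD p.1 default) (w.getD p.2 default))
    (fun p => njE a b g (w.getD p.1 default) (w.getD p.2 default))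
  have key2 := Finset.sum_filter_add_sum_filter_not
    (T.pairs.filter (fun p => ¬ bGC (w.getD p.1 default) (w.getD p.2 default)))
    (fun p => bAU (w.getD p.1 default) (w.getD p.2 default))
    (fun p => njE a b g (w.getD p.1 default) (w.getD p.2 default))
  rw [e1, e2] at key2
  have s1 : ∑ p ∈ pf w bGC T, njE a b g (w.getD p.1 default) (w.getD p.2 default)
      = a * (pf w bGC T).card := by
    rw [Finset.sum_congr rfl (fun p hp => njE_GC a b g (mem_pf.mp hp).2),
      Finset.sum_const, nsmul_eq_mul, mul_comm]
  have s2 : ∑ p ∈ pf w bAU T, njE a b g (w.getD p.1 default) (w.getD p.2 default)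
      = b * (pf w bAU T).card := by
    rw [Finset.sum_congr rfl (fun p hp => njE_AU a b g (mem_pf.mp hp).2),
      Finset.sum_const, nsmul_eq_mul, mul_comm]
  have s3 : ∑ p ∈ pf w bGU T, njE a b g (w.getD p.1 default) (w.getD p.2 default)
      = g * (pf w bGU T).card := by
    rw [Finset.sum_congr rfl (fun p hp => njE_GU a b g (mem_pf.mp hp).2),
      Finset.sum_const, nsmul_eq_mul, mul_comm]
  unfold energy
  rw [← key, show (T.pairs.filter (fun p => bGC (w.getD p.1 default) (w.getD p.2 default)))
      = pf w bGC T from rfl, ← key2, s1, s2, s3]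
  ring

lemma card_nj (w : List Base) (T : SecStr) (hc : compat njPair w T) :
    T.pairs.card = (pf w bGC T).card + (pf w bAU T).card + (pf w bGU T).card := by
  obtain ⟨e1, e2⟩ := split_pairs w T hc
  have key := Finset.card_filter_add_card_filter_not (s := T.pairs)
    (p := fun p => bGC (w.getD p.1 default) (w.getD p.2 default))
  have key2 := Finset.card_filter_add_card_filter_not
    (s := T.pairs.filter (fun p => ¬ bGC (w.getD p.1 default) (w.getD p.2 default)))
    (p := fun p => bAU (w.getD p.1 default) (w.getD p.2 default))
  rw [e1, e2] at key2
  have e3 : (T.pairs.filter (fun p => bGC (w.getD p.1 default) (w.getD p.2 default)))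
      = pf w bGC T := rfl
  rw [e3] at key
  omega

lemma wc_GU_empty (w : List Base) (T : SecStr) (hc : compat wcPair w T) :
    (pf w bGU T).card = 0 := by
  rw [Finset.card_eq_zero, Finset.eq_empty_iff_forall_notMem]
  intro p hp
  obtain ⟨hp1, hp2⟩ := mem_pf.mp hp
  exact wc_not_GU (hc.2 p hp1) hp2

lemma energy_const (w : List Base) (T : SecStr) :
    energy (fun _ _ => (-1 : ℝ)) w T = -(T.pairs.card : ℝ) := by
  simp [energy]

/-- G-side counting for an nj-compatible structure. -/
lemma countG (w : List Base) (T : SecStr) (hc : compat njPair w T) :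
    (pf w bGC T).card + (pf w bGU T).card ≤ (pos w .G).card := by
  have hdisj : Disjoint (pf w bGC T) (pf w bGU T) := by
    rw [Finset.disjoint_left]
    intro p hp1 hp2
    exact GC_not_GU (mem_pf.mp hp1).2 (mem_pf.mp hp2).2
  rw [← Finset.card_union_of_disjoint hdisj]
  apply Finset.card_le_card_of_injOn (fun p => if w.getD p.1 default = Base.G then p.1 else p.2)
  · intro p hp
    have hp' : p ∈ T.pairs ∧ (bGC (w.getD p.1 default) (w.getD p.2 default) ∨
        bGU (w.getD p.1 default) (w.getD p.2 default)) := by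
      rcases Finset.mem_union.mp hp with h | h
      · exact ⟨(mem_pf.mp h).1, Or.inl (mem_pf.mp h).2⟩
      · exact ⟨(mem_pf.mp h).1, Or.inr (mem_pf.mp h).2⟩
    have hlt : p.1 < p.2 := T.lt p hp'.1
    have hub : p.2 < w.length := hc.1 ▸ T.ub p hp'.1
    by_cases h1 : w.getD p.1 default = Base.G
    · simp only [if_pos h1]
      exact mem_pos.mpr ⟨by omega, h1⟩
    · simp only [if_neg h1]
      have h2 : w.getD p.2 default = Base.G := by
        rcases hp'.2 with (⟨hx, hy⟩ | ⟨hx, hy⟩) | (⟨hx, hy⟩ | ⟨hx, hy⟩)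
        · exact absurd hx h1
        · exact hy
        · exact absurd hx h1
        · exact hy
      exact mem_pos.mpr ⟨hub, h2⟩
  · intro p hp q hq hfq
    have hp1 : p ∈ T.pairs := by
      rcases Finset.mem_union.mp (Finset.mem_coe.mp hp) with h | h <;> exact (mem_pf.mp h).1
    have hq1 : q ∈ T.pairs := by
      rcases Finset.mem_union.mp (Finset.mem_coe.mp hq) with h | h <;> exact (mem_pf.mp h).1
    by_contra hne
    obtain ⟨a1, a2, a3, a4⟩ := T.once p hp1 q hq1 hne
    simp only at hfq
    split_ifs at hfq <;> omega

/-- U-side counting for an nj-compatible structure. -/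
lemma countU (w : List Base) (T : SecStr) (hc : compat njPair w T) :
    (pf w bAU T).card + (pf w bGU T).card ≤ (pos w .U).card := by
  have hdisj : Disjoint (pf w bAU T) (pf w bGU T) := by
    rw [Finset.disjoint_left]
    intro p hp1 hp2
    exact AU_not_GU (mem_pf.mp hp1).2 (mem_pf.mp hp2).2
  rw [← Finset.card_union_of_disjoint hdisj]
  apply Finset.card_le_card_of_injOn (fun p => if w.getD p.1 default = Base.U then p.1 else p.2)
  · intro p hp
    have hp' : p ∈ T.pairs ∧ (bAU (w.getD p.1 default) (w.getD p.2 default) ∨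
        bGU (w.getD p.1 default) (w.getD p.2 default)) := by
      rcases Finset.mem_union.mp hp with h | h
      · exact ⟨(mem_pf.mp h).1, Or.inl (mem_pf.mp h).2⟩
      · exact ⟨(mem_pf.mp h).1, Or.inr (mem_pf.mp h).2⟩
    have hlt : p.1 < p.2 := T.lt p hp'.1
    have hub : p.2 < w.length := hc.1 ▸ T.ub p hp'.1
    by_cases h1 : w.getD p.1 default = Base.U
    · simp only [if_pos h1]
      exact mem_pos.mpr ⟨by omega, h1⟩
    · simp only [if_neg h1]
      have h2 : w.getD p.2 default = Base.U := by
        rcases hp'.2 with (⟨hx, hy⟩ | ⟨hx, hy⟩) | (⟨hx, hy⟩ | ⟨hx, hy⟩)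
        · exact hy
        · exact absurd hx h1
        · exact hy
        · exact absurd hx h1
      exact mem_pos.mpr ⟨hub, h2⟩
  · intro p hp q hq hfq
    have hp1 : p ∈ T.pairs := by
      rcases Finset.mem_union.mp (Finset.mem_coe.mp hp) with h | h <;> exact (mem_pf.mp h).1
    have hq1 : q ∈ T.pairs := by
      rcases Finset.mem_union.mp (Finset.mem_coe.mp hq) with h | h <;> exact (mem_pf.mp h).1
    by_contra hne
    obtain ⟨a1, a2, a3, a4⟩ := T.once p hp1 q hq1 hne
    simp only at hfq
    split_ifs at hfq <;> omega

lemma pairedAt_ex {S : SecStr} {i : ℕ} (h : S.pairedAt i) :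
    ∃ p, p ∈ S.pairs ∧ (p.1 = i ∨ p.2 = i) := by
  obtain ⟨p, hp, hi⟩ := h
  exact ⟨p, hp, hi⟩

noncomputable def pick (S : SecStr) (i : ℕ) : ℕ × ℕ :=
  if h : S.pairedAt i then (pairedAt_ex h).choose else (0, 0)

lemma pick_spec {S : SecStr} {i : ℕ} (h : S.pairedAt i) :
    pick S i ∈ S.pairs ∧ ((pick S i).1 = i ∨ (pick S i).2 = i) := by
  rw [pick, dif_pos h]
  exact (pairedAt_ex h).choose_spec

lemma countS_G (w : List Base) (S : SecStr) (hwc : compat wcPair w S)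
    (hunp : ∀ i, S.unpairedAt i → w.getD i default = Base.A) :
    (pos w .G).card ≤ (pf w bGC S).card := by
  have hpa : ∀ i ∈ pos w Base.G, S.pairedAt i := by
    intro i hi
    obtain ⟨hlen, hG⟩ := mem_pos.mp hi
    by_contra h
    have hA := hunp i ⟨by rw [hwc.1]; exact hlen, h⟩
    exact absurd (hG.symm.trans hA) (by simp)
  apply Finset.card_le_card_of_injOn (pick S)
  · intro i hi
    obtain ⟨hp, hio⟩ := pick_spec (hpa i hi)
    obtain ⟨hlen, hG⟩ := mem_pos.mp hi
    rw [Finset.mem_coe, mem_pf]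
    refine ⟨hp, ?_⟩
    have hwcp := hwc.2 _ hp
    rcases hio with he | he
    · have h1 : w.getD (pick S i).1 default = Base.G := by rw [he]; exact hG
      rw [h1] at hwcp ⊢
      exact Or.inl ⟨rfl, wc_G_left hwcp⟩
    · have h1 : w.getD (pick S i).2 default = Base.G := by rw [he]; exact hG
      rw [h1] at hwcp ⊢
      exact Or.inr ⟨wc_G_right hwcp, rfl⟩
  · intro i hi j hj hij
    have hi' := Finset.mem_coe.mp hi
    have hj' := Finset.mem_coe.mp hj
    obtain ⟨hpi, hioi⟩ := pick_spec (hpa i hi')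
    obtain ⟨hpj, hioj⟩ := pick_spec (hpa j hj')
    rw [hij] at hioi
    have hGi : w.getD i default = Base.G := (mem_pos.mp hi').2
    have hGj : w.getD j default = Base.G := (mem_pos.mp hj').2
    have hwcp := hwc.2 _ hpj
    rcases hioi with e1 | e1 <;> rcases hioj with e2 | e2
    · omega
    · rw [e2, e1, hGi, hGj] at hwcp
      simp [wcPair] at hwcp
    · rw [e2, e1, hGi, hGj] at hwcp
      simp [wcPair] at hwcp
    · omega

lemma countS_U (w : List Base) (S : SecStr) (hwc : compat wcPair w S)
    (hunp : ∀ i, S.unpairedAt i → w.getD i default = Base.A) :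
    (pos w .U).card ≤ (pf w bAU S).card := by
  have hpa : ∀ i ∈ pos w Base.U, S.pairedAt i := by
    intro i hi
    obtain ⟨hlen, hU⟩ := mem_pos.mp hi
    by_contra h
    have hA := hunp i ⟨by rw [hwc.1]; exact hlen, h⟩
    exact absurd (hU.symm.trans hA) (by simp)
  apply Finset.card_le_card_of_injOn (pick S)
  · intro i hi
    obtain ⟨hp, hio⟩ := pick_spec (hpa i hi)
    obtain ⟨hlen, hU⟩ := mem_pos.mp hi
    rw [Finset.mem_coe, mem_pf]
    refine ⟨hp, ?_⟩
    have hwcp := hwc.2 _ hp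
    rcases hio with he | he
    · have h1 : w.getD (pick S i).1 default = Base.U := by rw [he]; exact hU
      rw [h1] at hwcp ⊢
      exact Or.inr ⟨rfl, wc_U_left hwcp⟩
    · have h1 : w.getD (pick S i).2 default = Base.U := by rw [he]; exact hU
      rw [h1] at hwcp ⊢
      exact Or.inl ⟨wc_U_right hwcp, rfl⟩
  · intro i hi j hj hij
    have hi' := Finset.mem_coe.mp hi
    have hj' := Finset.mem_coe.mp hj
    obtain ⟨hpi, hioi⟩ := pick_spec (hpa i hi')
    obtain ⟨hpj, hioj⟩ := pick_spec (hpa j hj')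
    rw [hij] at hioi
    have hUi : w.getD i default = Base.U := (mem_pos.mp hi').2
    have hUj : w.getD j default = Base.U := (mem_pos.mp hj').2
    have hwcp := hwc.2 _ hpj
    rcases hioi with e1 | e1 <;> rcases hioj with e2 | e2
    · omega
    · rw [e2, e1, hUi, hUj] at hwcp
      simp [wcPair] at hwcp
    · rw [e2, e1, hUi, hUj] at hwcp
      simp [wcPair] at hwcp
    · omega


lemma arith_wc (a b g Δ : ℝ) (ha : a < 0) (hb : b < 0)
    (hΔa : Δ ≤ -a) (hΔb : Δ ≤ -b)
    (n1 n2 n3 m1 m2 m3 : ℕ) (hn3 : n3 = 0) (hm3 : m3 = 0)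
    (h1 : n1 ≤ m1) (h2 : n2 ≤ m2) (h3 : n1 + n2 + 1 ≤ m1 + m2) :
    a * n1 + b * n2 + g * n3 ≥ a * m1 + b * m2 + g * m3 + Δ := by
  subst hn3 hm3
  push_cast
  by_cases hx : n1 + 1 ≤ m1
  · have c1 : (n1 : ℝ) + 1 ≤ (m1 : ℝ) := by exact_mod_cast hx
    have c2 : (n2 : ℝ) ≤ (m2 : ℝ) := by exact_mod_cast h2
    nlinarith [mul_nonneg (by linarith : (0:ℝ) ≤ -a) (by linarith : (0:ℝ) ≤ (m1:ℝ) - n1 - 1),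
      mul_nonneg (by linarith : (0:ℝ) ≤ -b) (by linarith : (0:ℝ) ≤ (m2:ℝ) - n2)]
  · have hy : n2 + 1 ≤ m2 := by omega
    have c1 : (n1 : ℝ) ≤ (m1 : ℝ) := by exact_mod_cast h1
    have c2 : (n2 : ℝ) + 1 ≤ (m2 : ℝ) := by exact_mod_cast hy
    nlinarith [mul_nonneg (by linarith : (0:ℝ) ≤ -a) (by linarith : (0:ℝ) ≤ (m1:ℝ) - n1),
      mul_nonneg (by linarith : (0:ℝ) ≤ -b) (by linarith : (0:ℝ) ≤ (m2:ℝ) - n2 - 1)]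

lemma arith_gu (a b g Δ : ℝ) (ha : a < 0) (hb : b < 0) (hag : a < g) (hbg : b < g)
    (hΔb : Δ ≤ -b)
    (n1 n2 n3 m1 m2 m3 : ℕ) (hm3 : m3 = 0) (hn3 : 1 ≤ n3)
    (h1 : n1 + n3 ≤ m1) (h2 : n2 + n3 ≤ m2) :
    a * n1 + b * n2 + g * n3 ≥ a * m1 + b * m2 + g * m3 + Δ := by
  subst hm3
  push_cast
  have c1 : (n1 : ℝ) + n3 ≤ (m1 : ℝ) := by exact_mod_cast h1
  have c2 : (n2 : ℝ) + n3 ≤ (m2 : ℝ) := by exact_mod_cast h2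
  have c3 : (1 : ℝ) ≤ (n3 : ℝ) := by exact_mod_cast hn3
  have hΔg : Δ ≤ g - a - b := by linarith
  nlinarith [mul_nonneg (by linarith : (0:ℝ) ≤ -a) (by linarith : (0:ℝ) ≤ (m1:ℝ) - n1 - n3),
    mul_nonneg (by linarith : (0:ℝ) ≤ -b) (by linarith : (0:ℝ) ≤ (m2:ℝ) - n2 - n3),
    mul_nonneg (by linarith : (0:ℝ) ≤ g - a - b) (by linarith : (0:ℝ) ≤ (n3:ℝ) - 1)]

end Stmt19Aux

/-- an A-unpaired Watson-Crick 1-design for S is also a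
Δ_N-design for S in the Nussinov-Jacobson model, for 0 < Δ_N ≤ min(|α|,|β|). -/
theorem stmt19 (a b g : ℝ) (ha : a < 0) (hb : b < 0) (hg : g < 0)
    (hag : a < g) (hbg : b < g)
    (Δ : ℝ) (hΔ1 : 0 < Δ) (hΔ2 : Δ ≤ min (-a) (-b))
    (w : List Base) (S : SecStr)
    (hdes : isDesign wcPair (fun _ _ => (-1 : ℝ)) 1 w S)
    (hunp : ∀ i, S.unpairedAt i → w.getD i default = Base.A) :
    isDesign njPair (njE a b g) Δ w S := by 
  obtain ⟨hwcS, hgap⟩ := hdes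
  have hnjS : compat njPair w S := ⟨hwcS.1, fun p hp => wc_nj (hwcS.2 p hp)⟩
  refine ⟨hnjS, ?_⟩
  intro S' hc' hne
  have hES' := energy_nj a b g w S' hc'
  have hES := energy_nj a b g w S hnjS
  have hGUS : (pf w bGU S).card = 0 := wc_GU_empty w S hwcS
  have h1 := countG w S' hc'
  have h2 := countS_G w S hwcS hunp
  have h3 := countU w S' hc'
  have h4 := countS_U w S hwcS hunp
  have hΔa : Δ ≤ -a := le_trans hΔ2 (min_le_left _ _)
  have hΔb : Δ ≤ -b := le_trans hΔ2 (min_le_right _ _)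
  rw [hES', hES]
  by_cases hzero : (pf w bGU S').card = 0
  · -- no G-U pairs in S' : it is Watson-Crick compatible
    have hwc' : compat wcPair w S' := by
      refine ⟨hc'.1, fun p hp => ?_⟩
      have hemp : pf w bGU S' = ∅ := Finset.card_eq_zero.mp hzero
      rcases nj_cases (hc'.2 p hp) with h | h | h
      · exact wc_of_classes (Or.inl h)
      · exact wc_of_classes (Or.inr h)
      · exact absurd (mem_pf.mpr ⟨hp, h⟩) (by rw [hemp]; exact Finset.notMem_empty p)
    have hgap' := hgap S' hwc' hne
    rw [energy_const, energy_const] at hgap'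
    have hcard : S'.pairs.card + 1 ≤ S.pairs.card := by
      have : (S'.pairs.card : ℝ) + 1 ≤ (S.pairs.card : ℝ) := by linarith
      exact_mod_cast this
    have hdS := card_nj w S hnjS
    have hdS' := card_nj w S' hc'
    have hle1 : (pf w bGC S').card ≤ (pf w bGC S).card := by omega
    have hle2 : (pf w bAU S').card ≤ (pf w bAU S).card := by omega
    have hsum : (pf w bGC S').card + (pf w bAU S').card + 1
        ≤ (pf w bGC S).card + (pf w bAU S).card := by omega
    exact arith_wc a b g Δ ha hb hΔa hΔb _ _ _ _ _ _ hzero hGUS hle1 hle2 hsum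
  · -- S' contains at least one G-U pair
    have hgu1 : 1 ≤ (pf w bGU S').card := Nat.one_le_iff_ne_zero.mpr hzero
    have hxG : (pf w bGC S').card + (pf w bGU S').card ≤ (pf w bGC S).card := le_trans h1 h2
    have hxU : (pf w bAU S').card + (pf w bGU S').card ≤ (pf w bAU S).card := le_trans h3 h4
    exact arith_gu a b g Δ ha hb hag hbg hΔb _ _ _ _ _ _ hGUS hgu1 hxG hxU
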